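/- arXiv:1601.05766 — 6 statements merged into one kernel-verified Lean document; each statement's English description precedes it below -/
import Mathlib

section
/- For the function h(t) = (1+t)log(1+t) − t on [0,∞), its inverse h⁻¹ satisfies h⁻¹(t) ≤ √(2t) + 3t for all t ≥ 0. Equivalently, for all t ≥ 0, h(√(2t) + 3t) ≥ t. -/
lemma aux_deriv (x : ℝ) (hx : 0 < 1 + x) :
    HasDerivAt (fun y : ℝ => (2 + y) * Real.log (1 + y) - 2 * y)
      (Real.log (1 + x) + (2 + x) * (1 / (1 + x)) - 2) x := by
  have h1 : HasDerivAt (fun y : ℝ => 1 + y) 1 x := (hasDerivAt_id x).const_add 1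
  have h2 : HasDerivAt (fun y : ℝ => 2 + y) 1 x := (hasDerivAt_id x).const_add 2
  have hlog : HasDerivAt (fun y : ℝ => Real.log (1 + y)) (1 / (1 + x)) x := by
    simpa using h1.log hx.ne'
  have hmul : HasDerivAt (fun y : ℝ => (2 + y) * Real.log (1 + y))
      (1 * Real.log (1 + x) + (2 + x) * (1 / (1 + x))) x := h2.mul hlog
  have hlin : HasDerivAt (fun y : ℝ => 2 * y) 2 x := by
    simpa using (hasDerivAt_id x).const_mul 2
  exact (hmul.sub hlin).congr_deriv (by ring)

lemma aux_log_lb (u : ℝ) (hu : 0 ≤ u) : 2 * u ≤ (2 + u) * Real.log (1 + u) := by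
  have key : MonotoneOn (fun x : ℝ => (2 + x) * Real.log (1 + x) - 2 * x) (Set.Ici 0) := by
    apply monotoneOn_of_deriv_nonneg (convex_Ici 0)
    · intro x hx
      simp only [Set.mem_Ici] at hx
      exact (aux_deriv x (by linarith)).continuousAt.continuousWithinAt
    · intro x hx
      simp only [interior_Ici, Set.mem_Ioi] at hx
      exact (aux_deriv x (by linarith)).differentiableAt.differentiableWithinAt
    · intro x hx
      simp only [interior_Ici, Set.mem_Ioi] at hx
      have h1 : (0:ℝ) < 1 + x := by linarith
      rw [(aux_deriv x h1).deriv]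
      have hlb : Real.log (1 + x) ≥ 1 - 1 / (1 + x) := by
        have := Real.log_le_sub_one_of_pos (x := 1 / (1 + x)) (by positivity)
        rw [Real.log_div one_ne_zero h1.ne', Real.log_one] at this
        linarith
      have : (2 + x) * (1 / (1 + x)) = 1 + 1 / (1 + x) := by
        field_simp
        ring
      rw [this]
      linarith
  have h0 := key (Set.self_mem_Ici) (Set.mem_Ici.2 hu) hu
  simpa using h0

lemma aux_main (s t : ℝ) (ht : 0 ≤ t) (hs0 : 0 ≤ s) (hs2 : s ^ 2 = 2 * t) :
    t ≤ (1 + (s + 3 * t)) * Real.log (1 + (s + 3 * t)) - (s + 3 * t) := by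
  obtain ⟨u, hu⟩ : ∃ u : ℝ, u = s + 3 * t := ⟨_, rfl⟩
  rw [← hu]
  have hu0 : 0 ≤ u := by rw [hu]; positivity
  have key := aux_log_lb u hu0
  have h2u : (0:ℝ) < 2 + u := by linarith
  have hlog : 2 * u / (2 + u) ≤ Real.log (1 + u) := by
    rw [div_le_iff₀ h2u]; linarith
  have h1 : (1 + u) * (2 * u / (2 + u)) ≤ (1 + u) * Real.log (1 + u) :=
    mul_le_mul_of_nonneg_left hlog (by linarith)
  have h2 : (1 + u) * (2 * u / (2 + u)) - u = u ^ 2 / (2 + u) := by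
    field_simp; ring
  have h3 : t ≤ u ^ 2 / (2 + u) := by
    rw [le_div_iff₀ h2u, hu]
    nlinarith [mul_nonneg ht hs0, sq_nonneg t]
  linarith

/-- For `h(t) = (1+t)log(1+t) − t`, one has `h⁻¹(t) ≤ √(2t) + 3t`,
equivalently `h(√(2t) + 3t) ≥ t` for all `t ≥ 0`. -/
theorem stmt5 (t : ℝ) (ht : 0 ≤ t) :
    t ≤ (1 + (Real.sqrt (2 * t) + 3 * t)) *
          Real.log (1 + (Real.sqrt (2 * t) + 3 * t)) -
        (Real.sqrt (2 * t) + 3 * t) := by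
  exact aux_main (Real.sqrt (2 * t)) t ht (Real.sqrt_nonneg _)
    (Real.sq_sqrt (by linarith))
end

section
/- Let a ∈ [−∞,∞), b ∈ (−∞,∞] with a ≤ b, and y ∈ ℝⁿ. Let θ* be the Euclidean projection of y onto the cone 𝒮ₙ↑ of nondecreasing sequences, and let θ be the Euclidean projection of y onto 𝒮ₙ↑(a,b) = {v ∈ 𝒮ₙ↑ : a ≤ v₁, vₙ ≤ b}. Then the number of constant pieces satisfies k(θ) ≤ k(θ*). -/
private lemma aux_neg (S Q ε : ℝ) (hε : 0 < ε) (hQ : 0 ≤ Q)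
    (h : ∀ t : ℝ, 0 < t → t ≤ ε → 2 * t * S ≤ t ^ 2 * Q) : S ≤ 0 := by
  by_contra hS
  push_neg at hS
  rcases eq_or_lt_of_le hQ with hQ0 | hQ0
  · have := h ε hε le_rfl
    nlinarith
  · set t := min ε (S / Q) with ht
    have ht0 : 0 < t := lt_min hε (div_pos hS hQ0)
    have htε : t ≤ ε := min_le_left _ _
    have htq : t * Q ≤ S := (le_div_iff₀ hQ0).mp (min_le_right _ _)
    have h2 := h t ht0 htε
    nlinarith

private lemma expand_sum (n : ℕ) (y θ w : Fin (n + 1) → ℝ) (t : ℝ) :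
    ∑ i, (y i - (θ i + t * w i)) ^ 2
      = ∑ i, (y i - θ i) ^ 2 - 2 * t * ∑ i, (y i - θ i) * w i
        + t ^ 2 * ∑ i, (w i) ^ 2 := by
  rw [Finset.mul_sum, Finset.mul_sum, ← Finset.sum_sub_distrib, ← Finset.sum_add_distrib]
  exact Finset.sum_congr rfl fun i _ => by ring

private lemma clip_proj (n : ℕ) (a b : EReal)
    (y θstar θ : Fin (n + 1) → ℝ) (clip : ℝ → ℝ)
    (Hmono : Monotone clip)
    (Hlip : ∀ x z : ℝ, x ≤ z → clip z - clip x ≤ z - x)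
    (HfeasA : ∀ x : ℝ, a ≤ (clip x : EReal))
    (HfeasB : ∀ x : ℝ, (clip x : EReal) ≤ b)
    (Hsign : ∀ x v : ℝ, a ≤ (v : EReal) → (v : EReal) ≤ b →
      (x - clip x) * (v - clip x) ≤ 0)
    (hθstar : Monotone θstar ∧ ∀ v : Fin (n + 1) → ℝ, Monotone v →
      ∑ i, (y i - θstar i) ^ 2 ≤ ∑ i, (y i - v i) ^ 2)
    (hθ : (Monotone θ ∧ a ≤ (θ 0 : EReal) ∧ (θ (Fin.last n) : EReal) ≤ b) ∧
      ∀ v : Fin (n + 1) → ℝ, Monotone v → a ≤ (v 0 : EReal) →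
        (v (Fin.last n) : EReal) ≤ b →
        ∑ i, (y i - θ i) ^ 2 ≤ ∑ i, (y i - v i) ^ 2) :
    θ = fun i => clip (θstar i) := by
  set θhat : Fin (n + 1) → ℝ := fun i => clip (θstar i) with hθhat
  have hθhatmono : Monotone θhat := Hmono.comp hθstar.1
  -- cone inequality
  have Scone : ∀ v : Fin (n + 1) → ℝ, Monotone v →
      ∑ i, (y i - θstar i) * v i ≤ 0 := by
    intro v hv
    apply aux_neg _ (∑ i, (v i) ^ 2) 1 one_pos
      (Finset.sum_nonneg fun i _ => sq_nonneg _)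
    intro t ht0 _
    have hm : Monotone fun i => θstar i + t * v i := by
      intro i j hij
      have h1 := hθstar.1 hij
      have h2 := hv hij
      dsimp only
      nlinarith
    have := hθstar.2 _ hm
    rw [expand_sum] at this
    linarith
  -- ⟨y - θ*, θhat⟩ = 0
  have Szero : ∑ i, (y i - θstar i) * θhat i = 0 := by
    have hle : ∑ i, (y i - θstar i) * θhat i ≤ 0 := Scone θhat hθhatmono
    have hge : ∑ i, (y i - θstar i) * (-(θhat i)) ≤ 0 := by
      apply aux_neg _ (∑ i, (-(θhat i)) ^ 2) 1 one_pos
        (Finset.sum_nonneg fun i _ => sq_nonneg _)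
      intro t ht0 ht1
      have hm : Monotone fun i => θstar i + t * (-(θhat i)) := by
        intro i j hij
        have h1 := hθstar.1 hij
        have h2 := hθhatmono hij
        have h3 := Hlip (θstar i) (θstar j) h1
        dsimp only
        simp only [hθhat] at h2 h3 ⊢
        nlinarith
      have := hθstar.2 _ hm
      rw [expand_sum] at this
      linarith
    have : ∑ i, (y i - θstar i) * (-(θhat i)) = -∑ i, (y i - θstar i) * θhat i := by
      rw [← Finset.sum_neg_distrib]
      exact Finset.sum_congr rfl fun i _ => by ring
    rw [this] at hge
    linarith
  -- θhat is optimal for the constrained problem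
  have Dopt : ∀ v : Fin (n + 1) → ℝ, Monotone v → a ≤ (v 0 : EReal) →
      (v (Fin.last n) : EReal) ≤ b →
      ∑ i, (y i - θhat i) ^ 2 ≤ ∑ i, (y i - v i) ^ 2 := by
    intro v hv hva hvb
    have hbA : ∀ i, a ≤ ((v i : ℝ) : EReal) := fun i =>
      le_trans hva (EReal.coe_le_coe_iff.mpr (hv (Fin.zero_le i)))
    have hbB : ∀ i, ((v i : ℝ) : EReal) ≤ b := fun i =>
      le_trans (EReal.coe_le_coe_iff.mpr (hv (Fin.le_last i))) hvb
    have hcross : ∑ i, (y i - θhat i) * (v i - θhat i) ≤ 0 := by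
      have h1 : ∑ i, (y i - θhat i) * (v i - θhat i)
          = ∑ i, (y i - θstar i) * v i - ∑ i, (y i - θstar i) * θhat i
            + ∑ i, (θstar i - θhat i) * (v i - θhat i) := by
        rw [← Finset.sum_sub_distrib, ← Finset.sum_add_distrib]
        exact Finset.sum_congr rfl fun i _ => by ring
      have t3 : ∑ i, (θstar i - θhat i) * (v i - θhat i) ≤ 0 :=
        Finset.sum_nonpos fun i _ => Hsign _ _ (hbA i) (hbB i)
      have t1 := Scone v hv
      rw [h1, Szero]
      linarith
    have hexp : ∑ i, (y i - v i) ^ 2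
        = ∑ i, (y i - θhat i) ^ 2 - 2 * ∑ i, (y i - θhat i) * (v i - θhat i)
          + ∑ i, (v i - θhat i) ^ 2 := by
      rw [Finset.mul_sum, ← Finset.sum_sub_distrib, ← Finset.sum_add_distrib]
      exact Finset.sum_congr rfl fun i _ => by ring
    have hnn : (0:ℝ) ≤ ∑ i, (v i - θhat i) ^ 2 :=
      Finset.sum_nonneg fun i _ => sq_nonneg _
    rw [hexp]
    linarith
  -- uniqueness via midpoint
  have hVle : ∑ i, (y i - θ i) ^ 2 ≤ ∑ i, (y i - θhat i) ^ 2 :=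
    hθ.2 θhat hθhatmono (HfeasA _) (HfeasB _)
  have hVge : ∑ i, (y i - θhat i) ^ 2 ≤ ∑ i, (y i - θ i) ^ 2 :=
    Dopt θ hθ.1.1 hθ.1.2.1 hθ.1.2.2
  set m : Fin (n + 1) → ℝ := fun i => (θ i + θhat i) / 2 with hm
  have hmmono : Monotone m := by
    intro i j hij
    have h1 := hθ.1.1 hij
    have h2 := hθhatmono hij
    simp only [m]
    linarith
  have hma : a ≤ (m 0 : EReal) := by
    rcases le_total (θ 0) (θhat 0) with h | h
    · exact le_trans hθ.1.2.1 (EReal.coe_le_coe_iff.mpr (by simp only [m]; linarith))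
    · exact le_trans (HfeasA (θstar 0)) (EReal.coe_le_coe_iff.mpr (by simp only [m, θhat]; linarith))
  have hmb : (m (Fin.last n) : EReal) ≤ b := by
    rcases le_total (θ (Fin.last n)) (θhat (Fin.last n)) with h | h
    · exact le_trans (EReal.coe_le_coe_iff.mpr (by simp only [m, θhat]; linarith)) (HfeasB (θstar (Fin.last n)))
    · exact le_trans (EReal.coe_le_coe_iff.mpr (by simp only [m]; linarith)) hθ.1.2.2
  have hFm : ∑ i, (y i - m i) ^ 2
      = (∑ i, (y i - θ i) ^ 2) / 2 + (∑ i, (y i - θhat i) ^ 2) / 2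
        - ∑ i, ((θ i - θhat i) / 2) ^ 2 := by
    rw [Finset.sum_div, Finset.sum_div, ← Finset.sum_add_distrib, ← Finset.sum_sub_distrib]
    exact Finset.sum_congr rfl fun i _ => by simp only [m]; ring
  have hFmge := hθ.2 m hmmono hma hmb
  have hP : ∑ i, ((θ i - θhat i) / 2) ^ 2 ≤ 0 := by
    rw [hFm] at hFmge
    linarith
  have hP0 : ∑ i, ((θ i - θhat i) / 2) ^ 2 = 0 :=
    le_antisymm hP (Finset.sum_nonneg fun i _ => sq_nonneg _)
  funext i
  have := (Finset.sum_eq_zero_iff_of_nonneg (fun i _ => sq_nonneg ((θ i - θhat i) / 2))).mp hP0 i (Finset.mem_univ i)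
  have h2 : θ i - θhat i = 0 := by nlinarith [sq_nonneg (θ i - θhat i)]
  simp only [θhat] at h2 ⊢
  linarith


private lemma lip_min (B x z : ℝ) (h : x ≤ z) : min z B - min x B ≤ z - x := by
  rcases le_total z B with h1 | h1 <;> rcases le_total x B with h2 | h2 <;>
    simp [min_eq_left, min_eq_right, h1, h2] <;> linarith

private lemma lip_max (A x z : ℝ) (h : x ≤ z) : max z A - max x A ≤ z - x := by
  rcases le_total A z with h1 | h1 <;> rcases le_total A x with h2 | h2 <;>
    simp [max_eq_left, max_eq_right, h1, h2] <;> linarith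

private lemma final_step (n : ℕ) (a b : EReal)
    (y θstar θ : Fin (n + 1) → ℝ) (clip : ℝ → ℝ)
    (Hmono : Monotone clip)
    (Hlip : ∀ x z : ℝ, x ≤ z → clip z - clip x ≤ z - x)
    (HfeasA : ∀ x : ℝ, a ≤ (clip x : EReal))
    (HfeasB : ∀ x : ℝ, (clip x : EReal) ≤ b)
    (Hsign : ∀ x v : ℝ, a ≤ (v : EReal) → (v : EReal) ≤ b →
      (x - clip x) * (v - clip x) ≤ 0)
    (hθstar : Monotone θstar ∧ ∀ v : Fin (n + 1) → ℝ, Monotone v →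
      ∑ i, (y i - θstar i) ^ 2 ≤ ∑ i, (y i - v i) ^ 2)
    (hθ : (Monotone θ ∧ a ≤ (θ 0 : EReal) ∧ (θ (Fin.last n) : EReal) ≤ b) ∧
      ∀ v : Fin (n + 1) → ℝ, Monotone v → a ≤ (v 0 : EReal) →
        (v (Fin.last n) : EReal) ≤ b →
        ∑ i, (y i - θ i) ^ 2 ≤ ∑ i, (y i - v i) ^ 2) :
    (Finset.univ.image θ).card ≤ (Finset.univ.image θstar).card := by
  have hθeq := clip_proj n a b y θstar θ clip Hmono Hlip HfeasA HfeasB Hsign hθstar hθ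
  have himg : Finset.univ.image θ = (Finset.univ.image θstar).image clip := by
    rw [hθeq, Finset.image_image]
    rfl
  rw [himg]
  exact Finset.card_image_le

/-- Projecting onto the cone of nondecreasing sequences with boundary
constraints `a ≤ v₁` and `vₙ ≤ b` (with `a ∈ [−∞,∞)`, `b ∈ (−∞,∞]`, `a ≤ b`)
produces a vector with at most as many constant pieces as the projection onto
the unconstrained cone of nondecreasing sequences. -/
theorem stmt6 (n : ℕ) (a b : EReal) (ha : a ≠ ⊤) (hb : b ≠ ⊥) (hab : a ≤ b)
    (y θstar θ : Fin (n + 1) → ℝ)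
    (hθstar : Monotone θstar ∧ ∀ v : Fin (n + 1) → ℝ, Monotone v →
      ∑ i, (y i - θstar i) ^ 2 ≤ ∑ i, (y i - v i) ^ 2)
    (hθ : (Monotone θ ∧ a ≤ (θ 0 : EReal) ∧ (θ (Fin.last n) : EReal) ≤ b) ∧
      ∀ v : Fin (n + 1) → ℝ, Monotone v → a ≤ (v 0 : EReal) →
        (v (Fin.last n) : EReal) ≤ b →
        ∑ i, (y i - θ i) ^ 2 ≤ ∑ i, (y i - v i) ^ 2) :
    (Finset.univ.image θ).card ≤ (Finset.univ.image θstar).card := by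
  induction a using EReal.rec with
  | top => exact absurd rfl ha
  | bot =>
    induction b using EReal.rec with
    | bot => exact absurd rfl hb
    | top =>
      -- clip = id
      refine final_step n ⊥ ⊤ y θstar θ id monotone_id ?_ ?_ ?_ ?_ hθstar hθ
      · intro x z h; simp
      · intro x; exact bot_le
      · intro x; exact le_top
      · intro x v _ _; simp
    | coe B =>
      refine final_step n ⊥ (B : EReal) y θstar θ (fun x => min x B) ?_ ?_ ?_ ?_ ?_ hθstar hθ
      · intro x z h
        exact min_le_min h le_rfl
      · intro x z h
        exact lip_min B x z h
      · intro x; exact bot_le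
      · intro x; exact EReal.coe_le_coe_iff.mpr (min_le_right _ _)
      · intro x v _ hvb
        have hv : v ≤ B := EReal.coe_le_coe_iff.mp hvb
        rcases le_total x B with h1 | h1
        · simp [min_eq_left h1]
        · rw [min_eq_right h1]
          nlinarith
  | coe A =>
    induction b using EReal.rec with
    | bot => exact absurd rfl hb
    | top =>
      refine final_step n (A : EReal) ⊤ y θstar θ (fun x => max x A) ?_ ?_ ?_ ?_ ?_ hθstar hθ
      · intro x z h
        exact max_le_max h le_rfl
      · intro x z h
        exact lip_max A x z h
      · intro x; exact EReal.coe_le_coe_iff.mpr (le_max_right _ _)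
      · intro x; exact le_top
      · intro x v hva _
        have hv : A ≤ v := EReal.coe_le_coe_iff.mp hva
        rcases le_total A x with h1 | h1
        · simp [max_eq_left h1]
        · rw [max_eq_right h1]
          nlinarith
    | coe B =>
      have hAB : A ≤ B := EReal.coe_le_coe_iff.mp hab
      refine final_step n (A : EReal) (B : EReal) y θstar θ (fun x => min (max x A) B)
        ?_ ?_ ?_ ?_ ?_ hθstar hθ
      · intro x z h
        exact min_le_min (max_le_max h le_rfl) le_rfl
      · intro x z h
        have l1 := lip_min B (max x A) (max z A) (max_le_max h le_rfl)
        have l2 := lip_max A x z h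
        linarith
      · intro x
        exact EReal.coe_le_coe_iff.mpr (le_min (le_max_right x A) hAB)
      · intro x
        exact EReal.coe_le_coe_iff.mpr (min_le_right _ _)
      · intro x v hva hvb
        have hv1 : A ≤ v := EReal.coe_le_coe_iff.mp hva
        have hv2 : v ≤ B := EReal.coe_le_coe_iff.mp hvb
        rcases le_total A x with h1 | h1
        · rcases le_total x B with h3 | h3
          · simp [max_eq_left h1, min_eq_left h3]
          · rw [max_eq_left h1, min_eq_right h3]
            nlinarith
        · rw [max_eq_right h1, min_eq_left hAB]
          nlinarith
end

section
/- With the notation of the bounded isotonic projection lemma: if θ* is the projection of y onto 𝒮ₙ↑ and a ≤ b, let T_a = {i : θ*ᵢ ≤ a}, T_b = {i : θ*ᵢ ≥ b}, T_c = {i : a < θ*ᵢ < b}. Then the projection θ of y onto 𝒮ₙ↑(a,b) is given by θᵢ = a for i ∈ T_a, θᵢ = θ*ᵢ for i ∈ T_c, and θᵢ = b for i ∈ T_b. -/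
/-- Explicit formula for the projection onto the cone of nondecreasing
sequences with boundary constraints: it is obtained from the unconstrained
isotonic projection `θ*` by truncation at levels `a` and `b`. -/
theorem stmt7 (n : ℕ) (a b : ℝ) (hab : a ≤ b) (y θstar θ : Fin (n + 1) → ℝ)
    (hθstar : Monotone θstar ∧ ∀ v : Fin (n + 1) → ℝ, Monotone v →
      ∑ i, (y i - θstar i) ^ 2 ≤ ∑ i, (y i - v i) ^ 2)
    (hθ : (Monotone θ ∧ a ≤ θ 0 ∧ θ (Fin.last n) ≤ b) ∧
      ∀ v : Fin (n + 1) → ℝ, Monotone v → a ≤ v 0 → v (Fin.last n) ≤ b →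
        ∑ i, (y i - θ i) ^ 2 ≤ ∑ i, (y i - v i) ^ 2) :
    ∀ i, (θstar i ≤ a → θ i = a) ∧ (b ≤ θstar i → θ i = b) ∧
      (a < θstar i → θstar i < b → θ i = θstar i) := by
  obtain ⟨hmono, hmin⟩ := hθstar
  obtain ⟨⟨hθm, hθa, hθb⟩, hθmin⟩ := hθ
  set φ : Fin (n + 1) → ℝ := fun i => max a (min b (θstar i)) with hφdef
  -- clamp is monotone and 1-Lipschitz
  have φmono : Monotone φ := by
    intro i j hij
    exact max_le_max le_rfl (min_le_min le_rfl (hmono hij))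
  have φlip : ∀ i j : Fin (n + 1), i ≤ j → φ j - φ i ≤ θstar j - θstar i := by
    intro i j hij
    have h1 : θstar i ≤ θstar j := hmono hij
    simp only [hφdef, max_def, min_def]
    split_ifs <;> linarith
  have φa : a ≤ φ 0 := le_max_left _ _
  have φb : φ (Fin.last n) ≤ b := max_le hab (min_le_left _ _)
  -- Variational inequality for the cone projection θstar
  have VI : ∀ v : Fin (n + 1) → ℝ, Monotone v →
      ∑ i, (y i - θstar i) * (v i - θstar i) ≤ 0 := by
    intro v hv
    by_contra hS
    push_neg at hS
    set S := ∑ i, (y i - θstar i) * (v i - θstar i) with hSdef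
    set Q := ∑ i, (v i - θstar i) ^ 2 with hQdef
    have hQ0 : 0 ≤ Q := Finset.sum_nonneg fun i _ => sq_nonneg _
    have hQpos : 0 < Q := by
      rcases hQ0.lt_or_eq with h | h
      · exact h
      · exfalso
        have hz : ∀ i ∈ Finset.univ, (v i - θstar i) ^ 2 = 0 := by
          rw [← Finset.sum_eq_zero_iff_of_nonneg fun i _ => sq_nonneg (v i - θstar i)]
          exact h.symm
        have : S = 0 := by
          apply Finset.sum_eq_zero
          intro i hi
          have := hz i hi
          have hvi : v i - θstar i = 0 := by
            have := sq_eq_zero_iff.mp this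
            exact this
          rw [hvi, mul_zero]
        linarith
    set t : ℝ := min 1 (S / Q) with htdef
    have ht0 : 0 < t := lt_min one_pos (div_pos hS hQpos)
    have ht1 : t ≤ 1 := min_le_left _ _
    have htQ : t * Q ≤ S := by
      have : t ≤ S / Q := min_le_right _ _
      calc t * Q ≤ (S / Q) * Q := by nlinarith
        _ = S := by field_simp
    -- the perturbed point is monotone
    set w : Fin (n + 1) → ℝ := fun i => θstar i + t * (v i - θstar i) with hwdef
    have hwmono : Monotone w := by
      intro i j hij
      have h1 := hmono hij
      have h2 := hv hij
      simp only [hwdef]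
      nlinarith
    have hkey := hmin w hwmono
    have hexp : ∑ i, (y i - w i) ^ 2
        = ∑ i, (y i - θstar i) ^ 2 - 2 * t * S + t ^ 2 * Q := by
      have : ∀ i ∈ Finset.univ, (y i - w i) ^ 2
          = (y i - θstar i) ^ 2 - 2 * t * ((y i - θstar i) * (v i - θstar i))
            + t ^ 2 * (v i - θstar i) ^ 2 := by
        intro i _
        simp only [hwdef]
        ring
      rw [Finset.sum_congr rfl this, Finset.sum_add_distrib, Finset.sum_sub_distrib,
        ← Finset.mul_sum, ← Finset.mul_sum]
    rw [hexp] at hkey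
    nlinarith
  -- consequences of the VI
  have VIzero : ∑ i, (y i - θstar i) * θstar i = 0 := by
    have h1 := VI (fun _ => (0 : ℝ)) monotone_const
    have h2 := VI (fun i => 2 * θstar i) (by intro i j hij; have := hmono hij; dsimp; linarith)
    have e1 : ∑ i, (y i - θstar i) * ((0 : ℝ) - θstar i)
        = -∑ i, (y i - θstar i) * θstar i := by
      rw [← Finset.sum_neg_distrib]
      exact Finset.sum_congr rfl fun i _ => by ring
    have e2 : ∑ i, (y i - θstar i) * (2 * θstar i - θstar i)
        = ∑ i, (y i - θstar i) * θstar i :=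
      Finset.sum_congr rfl fun i _ => by ring
    rw [e1] at h1
    rw [e2] at h2
    linarith
  have VIphi : 0 ≤ ∑ i, (y i - θstar i) * (φ i - θstar i) := by
    have hm : Monotone (fun i => 2 * θstar i - φ i) := by
      intro i j hij
      have h1 := hmono hij
      have h2 := φlip i j hij
      dsimp
      linarith
    have h := VI _ hm
    have e : ∑ i, (y i - θstar i) * ((2 * θstar i - φ i) - θstar i)
        = -∑ i, (y i - θstar i) * (φ i - θstar i) := by
      rw [← Finset.sum_neg_distrib]
      exact Finset.sum_congr rfl fun i _ => by ring
    rw [e] at h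
    linarith
  have VIv : ∀ v : Fin (n + 1) → ℝ, Monotone v →
      ∑ i, (y i - θstar i) * v i ≤ 0 := by
    intro v hv
    have h := VI (fun i => θstar i + v i) (hmono.add hv)
    have e : ∑ i, (y i - θstar i) * ((θstar i + v i) - θstar i)
        = ∑ i, (y i - θstar i) * v i :=
      Finset.sum_congr rfl fun i _ => by ring
    rw [e] at h
    exact h
  -- φ satisfies the variational inequality for the constrained set
  have VIφ : ∀ v : Fin (n + 1) → ℝ, Monotone v → a ≤ v 0 → v (Fin.last n) ≤ b →
      ∑ i, (y i - φ i) * (v i - φ i) ≤ 0 := by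
    intro v hv hva hvb
    have S4 : ∑ i, (θstar i - φ i) * (v i - φ i) ≤ 0 := by
      apply Finset.sum_nonpos
      intro i _
      have hvi1 : a ≤ v i := le_trans hva (hv (Fin.zero_le i))
      have hvi2 : v i ≤ b := le_trans (hv (Fin.le_last i)) hvb
      rcases le_total (θstar i) a with h | h
      · have hφi : φ i = a := by
          simp only [hφdef]
          rw [min_eq_right (h.trans hab), max_eq_left h]
        rw [hφi]
        exact mul_nonpos_of_nonpos_of_nonneg (by linarith) (by linarith)
      rcases le_total b (θstar i) with h' | h'
      · have hφi : φ i = b := by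
          simp only [hφdef]
          rw [min_eq_left h', max_eq_right hab]
        rw [hφi]
        exact mul_nonpos_of_nonneg_of_nonpos (by linarith) (by linarith)
      · have hφi : φ i = θstar i := by
          simp only [hφdef]
          rw [min_eq_right h', max_eq_right h]
        rw [hφi]
        simp
    have S1 := VIv v hv
    have e : ∑ i, (y i - φ i) * (v i - φ i)
        = ∑ i, (y i - θstar i) * v i - ∑ i, (y i - θstar i) * θstar i
          - ∑ i, (y i - θstar i) * (φ i - θstar i)
          + ∑ i, (θstar i - φ i) * (v i - φ i) := by
      rw [← Finset.sum_sub_distrib, ← Finset.sum_sub_distrib, ← Finset.sum_add_distrib]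
      exact Finset.sum_congr rfl fun i _ => by ring
    rw [e]
    linarith
  -- φ is a minimizer over the constrained set
  have φmin : ∀ v : Fin (n + 1) → ℝ, Monotone v → a ≤ v 0 → v (Fin.last n) ≤ b →
      ∑ i, (y i - φ i) ^ 2 ≤ ∑ i, (y i - v i) ^ 2 := by
    intro v hv hva hvb
    have h := VIφ v hv hva hvb
    have e : ∑ i, (y i - v i) ^ 2
        = ∑ i, (y i - φ i) ^ 2 - 2 * ∑ i, (y i - φ i) * (v i - φ i)
          + ∑ i, (v i - φ i) ^ 2 := by
      rw [Finset.mul_sum, ← Finset.sum_sub_distrib, ← Finset.sum_add_distrib]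
      exact Finset.sum_congr rfl fun i _ => by ring
    have hnn : 0 ≤ ∑ i, (v i - φ i) ^ 2 := Finset.sum_nonneg fun i _ => sq_nonneg _
    rw [e]
    linarith
  -- both θ and φ are minimizers, hence equal
  have hM1 := hθmin φ φmono φa φb
  have hM2 := φmin θ hθm hθa hθb
  have hMeq : ∑ i, (y i - θ i) ^ 2 = ∑ i, (y i - φ i) ^ 2 := le_antisymm hM1 hM2
  set u : Fin (n + 1) → ℝ := fun i => (θ i + φ i) / 2 with hudef
  have humono : Monotone u := by
    intro i j hij
    have h1 := hθm hij
    have h2 := φmono hij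
    simp only [hudef]
    linarith
  have hua : a ≤ u 0 := by simp only [hudef]; linarith
  have hub : u (Fin.last n) ≤ b := by simp only [hudef]; linarith
  have hmid := hθmin u humono hua hub
  have e : ∑ i, (y i - u i) ^ 2
      = (∑ i, (y i - θ i) ^ 2 + ∑ i, (y i - φ i) ^ 2) / 2
        - (∑ i, (θ i - φ i) ^ 2) / 4 := by
    have : ∀ i ∈ Finset.univ, (y i - u i) ^ 2
        = ((y i - θ i) ^ 2 + (y i - φ i) ^ 2) / 2 - ((θ i - φ i) ^ 2) / 4 := by
      intro i _
      simp only [hudef]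
      ring
    rw [← Finset.sum_add_distrib, Finset.sum_div, Finset.sum_div, ← Finset.sum_sub_distrib]
    exact Finset.sum_congr rfl this
  rw [e, hMeq] at hmid
  have hD : ∑ i, (θ i - φ i) ^ 2 ≤ 0 := by linarith
  have hDnn : 0 ≤ ∑ i, (θ i - φ i) ^ 2 := Finset.sum_nonneg fun i _ => sq_nonneg _
  have hD0 : ∑ i, (θ i - φ i) ^ 2 = 0 := le_antisymm hD hDnn
  have hEq : ∀ i, θ i = φ i := by
    intro i
    have := (Finset.sum_eq_zero_iff_of_nonneg fun j _ => sq_nonneg (θ j - φ j)).mp hD0 i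
      (Finset.mem_univ i)
    have := sq_eq_zero_iff.mp this
    linarith
  -- conclude
  intro i
  refine ⟨fun h => ?_, fun h => ?_, fun h1 h2 => ?_⟩
  · rw [hEq i]
    simp only [hφdef]
    rw [min_eq_right (h.trans hab), max_eq_left h]
  · rw [hEq i]
    simp only [hφdef]
    rw [min_eq_left h, max_eq_right hab]
  · rw [hEq i]
    simp only [hφdef]
    rw [min_eq_right h2.le, max_eq_right h1.le]
end

section
/- Let y = μ + ξ with μ ∈ K for a closed convex set K ⊆ ℝⁿ, and let μ̂ = Π_K(y). Suppose T₁,...,T_m is a partition of {1,...,n} and for each j, C_j ⊆ ℝ^{|T_j|} is a closed convex cone containing (μ̂ − μ)_{T_j}. Then ‖μ̂ − μ‖² ≤ Σ_{j=1}^m ‖Π_{C_j}(ξ_{T_j})‖² (Euclidean norms). -/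
lemma var_ineq {ι : Type*} [Fintype ι] {S : Set (ι → ℝ)} (hconv : Convex ℝ S)
    (a p : ι → ℝ) (hp : p ∈ S)
    (hmin : ∀ z ∈ S, ∑ i, (a i - p i) ^ 2 ≤ ∑ i, (a i - z i) ^ 2)
    (q : ι → ℝ) (hq : q ∈ S) :
    ∑ i, (a i - p i) * (q i - p i) ≤ 0 := by
  set D := ∑ i, (a i - p i) * (q i - p i) with hD
  set N := ∑ i, (q i - p i) ^ 2 with hN
  have hNnn : 0 ≤ N := Finset.sum_nonneg fun i _ => sq_nonneg _
  have key : ∀ t : ℝ, 0 ≤ t → t ≤ 1 → 2 * t * D ≤ t ^ 2 * N := by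
    intro t ht ht1
    have hz : (fun i => p i + t * (q i - p i)) ∈ S := by
      have hmem := hconv hp hq (by linarith : (0:ℝ) ≤ 1 - t) ht (by ring)
      have : (1 - t) • p + t • q = fun i => p i + t * (q i - p i) := by
        funext i; simp [Pi.smul_apply, smul_eq_mul]; ring
      rwa [this] at hmem
    have h1 := hmin _ hz
    have expand : ∑ i, (a i - (p i + t * (q i - p i))) ^ 2
        = ∑ i, (a i - p i) ^ 2 - 2 * t * D + t ^ 2 * N := by
      rw [hD, hN, Finset.mul_sum, Finset.mul_sum, ← Finset.sum_sub_distrib,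
        ← Finset.sum_add_distrib]
      exact Finset.sum_congr rfl fun i _ => by ring
    rw [expand] at h1
    linarith
  by_contra hcon
  push_neg at hcon
  rcases eq_or_lt_of_le hNnn with hN0 | hNpos
  · have := key 1 zero_le_one le_rfl
    nlinarith
  · set t := min 1 (D / N) with htdef
    have ht0 : 0 < t := lt_min one_pos (div_pos hcon hNpos)
    have ht1 : t ≤ 1 := min_le_left _ _
    have htD : t ≤ D / N := min_le_right _ _
    have h := key t ht0.le ht1
    have : t ^ 2 * N ≤ t * D := by
      have : t * N ≤ D := by
        rw [← le_div_iff₀ hNpos] at *; exact htD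
      nlinarith
    nlinarith

/-- Blockwise bound for the projection error: if `μ̂ = Π_K(μ + ξ)` with `μ ∈ K`,
`T₁,...,T_m` is a partition of the index set and `C_j` are closed convex cones
with `(μ̂ − μ)_{T_j} ∈ C_j`, then `‖μ̂ − μ‖² ≤ Σ_j ‖Π_{C_j}(ξ_{T_j})‖²`. -/
theorem stmt9 (n m : ℕ) (K : Set (Fin n → ℝ)) (hcl : IsClosed K)
    (hconv : Convex ℝ K)
    (μ ξ μhat : Fin n → ℝ) (hμ : μ ∈ K)
    (hproj : μhat ∈ K ∧ ∀ z ∈ K,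
      ∑ i, (μ i + ξ i - μhat i) ^ 2 ≤ ∑ i, (μ i + ξ i - z i) ^ 2)
    (T : Fin m → Finset (Fin n))
    (hdisj : ∀ j₁ j₂, j₁ ≠ j₂ → Disjoint (T j₁) (T j₂))
    (hcover : ∀ i, ∃ j, i ∈ T j)
    (C : ∀ j : Fin m, Set ({x // x ∈ T j} → ℝ))
    (hCcl : ∀ j, IsClosed (C j)) (hCconv : ∀ j, Convex ℝ (C j))
    (hCne : ∀ j, (C j).Nonempty)
    (hCcone : ∀ j, ∀ x ∈ C j, ∀ c : ℝ, 0 ≤ c → c • x ∈ C j)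
    (hmem : ∀ j, (fun i : {x // x ∈ T j} => μhat i.1 - μ i.1) ∈ C j)
    (P : ∀ j : Fin m, {x // x ∈ T j} → ℝ)
    (hP : ∀ j, P j ∈ C j ∧ ∀ z ∈ C j,
      ∑ i, (ξ i.1 - P j i) ^ 2 ≤ ∑ i, (ξ i.1 - z i) ^ 2) :
    ∑ i, (μhat i - μ i) ^ 2 ≤ ∑ j, ∑ i, (P j i) ^ 2 := by
  -- Step 1: obtuse angle at the projection onto K
  have h1 : ∑ i, (μ i + ξ i - μhat i) * (μ i - μhat i) ≤ 0 := by
    have hmin : ∀ z ∈ K, ∑ i, ((fun i => μ i + ξ i) i - μhat i) ^ 2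
        ≤ ∑ i, ((fun i => μ i + ξ i) i - z i) ^ 2 := hproj.2
    exact var_ineq hconv (fun i => μ i + ξ i) μhat hproj.1 hmin μ hμ
  have step1 : ∑ i, (μhat i - μ i) ^ 2 ≤ ∑ i, ξ i * (μhat i - μ i) := by
    have heq : ∑ i, ((μhat i - μ i) ^ 2 - ξ i * (μhat i - μ i))
        = ∑ i, (μ i + ξ i - μhat i) * (μ i - μhat i) :=
      Finset.sum_congr rfl fun i _ => by ring
    rw [Finset.sum_sub_distrib] at heq
    linarith
  -- Step 2: per block, ⟨ξ - P j, v⟩ ≤ 0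
  have step2 : ∀ j, ∑ i : {x // x ∈ T j}, ξ i.1 * (μhat i.1 - μ i.1)
      ≤ ∑ i : {x // x ∈ T j}, P j i * (μhat i.1 - μ i.1) := by
    intro j
    have h2 := var_ineq (hCconv j) (fun i => ξ i.1) (P j) (hP j).1 (hP j).2
      _ (hmem j)
    have h2P : ((2:ℝ) • P j) ∈ C j := hCcone j (P j) (hP j).1 2 (by norm_num)
    have h3 := var_ineq (hCconv j) (fun i => ξ i.1) (P j) (hP j).1 (hP j).2
      _ h2P
    simp only [Pi.smul_apply, smul_eq_mul] at h3
    have hsum : ∑ i : {x // x ∈ T j}, (ξ i.1 - P j i) * ((μhat i.1 - μ i.1) - P j i)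
        + ∑ i : {x // x ∈ T j}, (ξ i.1 - P j i) * (2 * P j i - P j i)
        = ∑ i : {x // x ∈ T j}, (ξ i.1 * (μhat i.1 - μ i.1) - P j i * (μhat i.1 - μ i.1)) := by
      rw [← Finset.sum_add_distrib]
      exact Finset.sum_congr rfl fun i _ => by ring
    rw [Finset.sum_sub_distrib] at hsum
    linarith
  -- Step 3: 2⟨P, v⟩ ≤ ‖P‖² + ‖v‖² per block
  have step3 : ∀ j, 2 * ∑ i : {x // x ∈ T j}, P j i * (μhat i.1 - μ i.1)
      ≤ ∑ i : {x // x ∈ T j}, (P j i) ^ 2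
        + ∑ i : {x // x ∈ T j}, (μhat i.1 - μ i.1) ^ 2 := by
    intro j
    have h0 : (0:ℝ) ≤ ∑ i : {x // x ∈ T j}, (P j i - (μhat i.1 - μ i.1)) ^ 2 :=
      Finset.sum_nonneg fun i _ => sq_nonneg _
    have heq : ∑ i : {x // x ∈ T j}, (P j i - (μhat i.1 - μ i.1)) ^ 2
        = ∑ i : {x // x ∈ T j}, (P j i) ^ 2
          + ∑ i : {x // x ∈ T j}, (μhat i.1 - μ i.1) ^ 2
          - 2 * ∑ i : {x // x ∈ T j}, P j i * (μhat i.1 - μ i.1) := by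
      rw [Finset.mul_sum, ← Finset.sum_add_distrib, ← Finset.sum_sub_distrib]
      exact Finset.sum_congr rfl fun i _ => by ring
    linarith [heq ▸ h0]
  -- Partition identity
  have hpart : ∀ g : Fin n → ℝ, ∑ i, g i = ∑ j, ∑ i : {x // x ∈ T j}, g i.1 := by
    intro g
    have huniv : (Finset.univ : Finset (Fin n)) = Finset.univ.biUnion T := by
      ext i
      simp only [Finset.mem_univ, Finset.mem_biUnion, true_and, true_iff]
      exact hcover i
    have hpd : ∀ j₁ ∈ (Finset.univ : Finset (Fin m)), ∀ j₂ ∈ Finset.univ,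
        j₁ ≠ j₂ → Disjoint (T j₁) (T j₂) := fun j₁ _ j₂ _ h => hdisj j₁ j₂ h
    calc ∑ i, g i = ∑ i ∈ Finset.univ.biUnion T, g i := by rw [← huniv]
      _ = ∑ j, ∑ i ∈ T j, g i := Finset.sum_biUnion hpd
      _ = ∑ j, ∑ i : {x // x ∈ T j}, g i.1 := by
          exact Finset.sum_congr rfl fun j _ => (Finset.sum_coe_sort (T j) g).symm
  -- Combine
  have hA := hpart (fun i => (μhat i - μ i) ^ 2)
  have hB := hpart (fun i => ξ i * (μhat i - μ i))
  have hsum2 : ∑ j, ∑ i : {x // x ∈ T j}, ξ i.1 * (μhat i.1 - μ i.1)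
      ≤ ∑ j, ∑ i : {x // x ∈ T j}, P j i * (μhat i.1 - μ i.1) :=
    Finset.sum_le_sum fun j _ => step2 j
  have hsum3 : ∑ j, 2 * ∑ i : {x // x ∈ T j}, P j i * (μhat i.1 - μ i.1)
      ≤ ∑ j, (∑ i : {x // x ∈ T j}, (P j i) ^ 2
        + ∑ i : {x // x ∈ T j}, (μhat i.1 - μ i.1) ^ 2) :=
    Finset.sum_le_sum fun j _ => step3 j
  rw [← Finset.mul_sum] at hsum3
  rw [Finset.sum_add_distrib] at hsum3
  linarith
end

section
/- Let C ⊆ ℝᵐ be a closed convex cone whose lineality space contains a vector w (i.e., w ∈ C and −w ∈ C). Then for all y ∈ ℝᵐ and all c ∈ ℝ, Π_C(y + cw) = Π_C(y) + cw. -/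
/-- Translation equivariance of the conic projection along the lineality
space: if `w ∈ C` and `−w ∈ C`, then `Π_C(y + cw) = Π_C(y) + cw`. -/
theorem stmt13 (m : ℕ) (C : Set (EuclideanSpace ℝ (Fin m)))
    (hcl : IsClosed C) (hconv : Convex ℝ C)
    (hcone : ∀ x ∈ C, ∀ c : ℝ, 0 ≤ c → c • x ∈ C)
    (w : EuclideanSpace ℝ (Fin m)) (hw : w ∈ C) (hw' : -w ∈ C)
    (y : EuclideanSpace ℝ (Fin m)) (c : ℝ)
    (p q : EuclideanSpace ℝ (Fin m))
    (hp : p ∈ C ∧ ∀ z ∈ C, ‖y - p‖ ≤ ‖y - z‖)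
    (hq : q ∈ C ∧ ∀ z ∈ C, ‖y + c • w - q‖ ≤ ‖y + c • w - z‖) :
    q = p + c • w := by
  -- C is closed under adding any real multiple of w
  have hadd : ∀ z ∈ C, ∀ t : ℝ, z + t • w ∈ C := by
    intro z hz t
    have hv : t • w ∈ C := by
      rcases le_total 0 t with h | h
      · exact hcone w hw t h
      · have := hcone (-w) hw' (-t) (by linarith)
        simpa [smul_neg, neg_smul] using this
    have hmid : (1/2 : ℝ) • z + (1/2 : ℝ) • (t • w) ∈ C :=
      hconv hz hv (by norm_num) (by norm_num) (by norm_num)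
    have := hcone _ hmid 2 (by norm_num)
    have h2 : (2 : ℝ) • ((1/2 : ℝ) • z + (1/2 : ℝ) • (t • w)) = z + t • w := by
      rw [smul_add, smul_smul, smul_smul]; norm_num
    rwa [h2] at this
  set x := y + c • w with hx
  set b := p + c • w with hb
  have hbC : b ∈ C := hadd p hp.1 c
  -- b is also a minimizer for x
  have hb_min : ∀ z ∈ C, ‖x - b‖ ≤ ‖x - z‖ := by
    intro z hz
    have hz' : z + (-c) • w ∈ C := hadd z hz (-c)
    have h1 : x - b = y - p := by rw [hx, hb]; abel
    have h2 : x - z = y - (z + (-c) • w) := by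
      rw [hx, neg_smul]; abel
    rw [h1, h2]
    exact hp.2 _ hz'
  -- equal distances
  have heq : ‖x - q‖ = ‖x - b‖ :=
    le_antisymm (hq.2 b hbC) (hb_min q hq.1)
  -- midpoint argument
  have hmidC : (1/2 : ℝ) • q + (1/2 : ℝ) • b ∈ C :=
    hconv hq.1 hbC (by norm_num) (by norm_num) (by norm_num)
  have hmid : ‖x - q‖ ≤ ‖x - ((1/2 : ℝ) • q + (1/2 : ℝ) • b)‖ := hq.2 _ hmidC
  have hpar := parallelogram_law_with_norm ℝ (x - q) (x - b)
  have hsum : x - q + (x - b) = (2 : ℝ) • (x - ((1/2 : ℝ) • q + (1/2 : ℝ) • b)) := by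
    module
  have hdiff : x - q - (x - b) = b - q := by abel
  rw [hsum, hdiff, norm_smul, Real.norm_ofNat] at hpar
  have hqb : ‖b - q‖ = 0 := by
    have h2 : ‖x - q‖ ≤ ‖x - ((1/2 : ℝ) • q + (1/2 : ℝ) • b)‖ := hmid
    nlinarith [norm_nonneg (b - q), norm_nonneg (x - q),
      norm_nonneg (x - ((1/2 : ℝ) • q + (1/2 : ℝ) • b)), heq]
  have : b - q = 0 := norm_eq_zero.mp hqb
  have : b = q := by linear_combination (norm := abel) this
  rw [← this, hb]
end

section
/- Let μ ∈ 𝒮ₙ∪ be a convex sequence which is affine on each block of a partition (T₁,...,T_q) of {1,...,n} into consecutive intervals. Then the tangent cone of 𝒮ₙ∪ at μ satisfies T_μ ⊆ 𝒮∪_{|T₁|} × ... × 𝒮∪_{|T_q|}, i.e., for every v ∈ T_μ and every j, the restriction v_{T_j} is a convex sequence in ℝ^{|T_j|}. -/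
/-- `u` is a convex sequence: `2uᵢ ≤ u_{i+1} + u_{i−1}` for interior indices. -/
def IsConvexSeq {n : ℕ} (u : Fin n → ℝ) : Prop :=
  ∀ i : ℕ, ∀ (h1 : 0 < i) (h2 : i + 1 < n),
    2 * u ⟨i, Nat.lt_of_succ_lt h2⟩ ≤
      u ⟨i + 1, h2⟩ + u ⟨i - 1, Nat.lt_of_le_of_lt (Nat.sub_le _ _) (Nat.lt_of_succ_lt h2)⟩

/-- If the convex sequence `μ` is affine on each block of a partition of the
index set into consecutive intervals, then every element of the tangent cone
of the cone of convex sequences at `μ` restricts to a convex sequence on each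
block. -/
theorem stmt18 (n q : ℕ) (T : Fin q → Finset (Fin n))
    (hdisj : ∀ j₁ j₂, j₁ ≠ j₂ → Disjoint (T j₁) (T j₂))
    (hcover : ∀ i, ∃ j, i ∈ T j)
    (hint : ∀ j, ∀ i₁ ∈ T j, ∀ i₂ ∈ T j, ∀ i : Fin n, i₁ ≤ i → i ≤ i₂ → i ∈ T j)
    (μ : Fin n → ℝ) (hμ : IsConvexSeq μ)
    (haff : ∀ j, ∀ i : ℕ, ∀ (h1 : 0 < i) (h2 : i + 1 < n),
      (⟨i - 1, Nat.lt_of_le_of_lt (Nat.sub_le _ _) (Nat.lt_of_succ_lt h2)⟩ : Fin n) ∈ T j →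
      (⟨i, Nat.lt_of_succ_lt h2⟩ : Fin n) ∈ T j →
      (⟨i + 1, h2⟩ : Fin n) ∈ T j →
      2 * μ ⟨i, Nat.lt_of_succ_lt h2⟩ =
        μ ⟨i + 1, h2⟩ + μ ⟨i - 1, Nat.lt_of_le_of_lt (Nat.sub_le _ _) (Nat.lt_of_succ_lt h2)⟩)
    (v : Fin n → ℝ)
    (hv : v ∈ closure {w : Fin n → ℝ |
      ∃ t : ℝ, 0 ≤ t ∧ ∃ u : Fin n → ℝ, IsConvexSeq u ∧ w = t • (u - μ)}) :
    ∀ j, ∀ i : ℕ, ∀ (h1 : 0 < i) (h2 : i + 1 < n),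
      (⟨i - 1, Nat.lt_of_le_of_lt (Nat.sub_le _ _) (Nat.lt_of_succ_lt h2)⟩ : Fin n) ∈ T j →
      (⟨i, Nat.lt_of_succ_lt h2⟩ : Fin n) ∈ T j →
      (⟨i + 1, h2⟩ : Fin n) ∈ T j →
      2 * v ⟨i, Nat.lt_of_succ_lt h2⟩ ≤
        v ⟨i + 1, h2⟩ + v ⟨i - 1, Nat.lt_of_le_of_lt (Nat.sub_le _ _) (Nat.lt_of_succ_lt h2)⟩ := by
  intro j i h1 h2 hm1 hm hp1
  set a : Fin n := ⟨i - 1, Nat.lt_of_le_of_lt (Nat.sub_le _ _) (Nat.lt_of_succ_lt h2)⟩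
  set b : Fin n := ⟨i, Nat.lt_of_succ_lt h2⟩
  set c : Fin n := ⟨i + 1, h2⟩
  have hμeq := haff j i h1 h2 hm1 hm hp1
  have hclosed : IsClosed {w : Fin n → ℝ | 2 * w b ≤ w c + w a} := by
    have : Continuous fun w : Fin n → ℝ => w c + w a - 2 * w b := by
      continuity
    have := isClosed_le (continuous_const : Continuous fun _ : Fin n → ℝ => (0:ℝ)) this
    convert this using 1
    ext w
    simp only [Set.mem_setOf_eq]
    constructor <;> intro h <;> linarith
  have hsub : {w : Fin n → ℝ |
      ∃ t : ℝ, 0 ≤ t ∧ ∃ u : Fin n → ℝ, IsConvexSeq u ∧ w = t • (u - μ)} ⊆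
      {w : Fin n → ℝ | 2 * w b ≤ w c + w a} := by
    rintro w ⟨t, ht, u, hu, rfl⟩
    have hub := hu i h1 h2
    simp only [Set.mem_setOf_eq, Pi.smul_apply, Pi.sub_apply, smul_eq_mul]
    nlinarith [mul_nonneg ht (by linarith : (0:ℝ) ≤ u c + u a - 2 * u b)]
  have := closure_minimal hsub hclosed
  exact this hv
end
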